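/- Fix s ∈ ℕ. Suppose ψ ∈ ℝ satisfies Ψ^s(t) ≤ ψ for all times t ≥ 0. Then for all natural numbers s′ ≥ s and all times t ≥ ψ/(μ−ρ), Ψ^{s′}(t) ≤ (ρ/μ)^{s′−s}·ψ. -/

import Mathlib

open Finset

variable {V : Type*}

/-- Node `v` satisfies the *fast condition* at time `t`. -/
def fastCond (G : SimpleGraph V) (L : V → ℝ → ℝ) (κ : ℝ) (v : V) (t : ℝ) : Prop :=
  ∃ s : ℕ, (∃ x, G.Adj v x ∧ (2 * (s : ℝ) + 1) * κ ≤ L x t - L v t) ∧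
    ∀ y, G.Adj v y → L v t - L y t ≤ (2 * (s : ℝ) + 1) * κ

/-- Node `v` satisfies the *slow condition* at time `t`. -/
def slowCond (G : SimpleGraph V) (L : V → ℝ → ℝ) (κ : ℝ) (v : V) (t : ℝ) : Prop :=
  ∃ s : ℕ, (∃ x, G.Adj v x ∧ 2 * (s : ℝ) * κ ≤ L v t - L x t) ∧
    ∀ y, G.Adj v y → L y t - L v t ≤ 2 * (s : ℝ) * κ

/-- `Ψ_v^s(t) = max_{w ∈ V} (L_w(t) - L_v(t) - 2sκ·d(v,w))`. -/
noncomputable def Psi [Fintype V] [Nonempty V] (G : SimpleGraph V) (L : V → ℝ → ℝ)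
    (κ : ℝ) (s : ℕ) (v : V) (t : ℝ) : ℝ :=
  univ.sup' univ_nonempty fun w => L w t - L v t - 2 * (s : ℝ) * κ * (G.dist v w)

/-- `Ψ^s(t) = max_{v ∈ V} Ψ_v^s(t)`. -/
noncomputable def PsiMax [Fintype V] [Nonempty V] (G : SimpleGraph V) (L : V → ℝ → ℝ)
    (κ : ℝ) (s : ℕ) (t : ℝ) : ℝ :=
  univ.sup' univ_nonempty fun v => Psi G L κ s v t

/-- `Ξ_v^s(t) = max_{w ∈ V} (L_v(t) - L_w(t) - (2s+1)κ·d(v,w))`. -/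
noncomputable def Xi [Fintype V] [Nonempty V] (G : SimpleGraph V) (L : V → ℝ → ℝ)
    (κ : ℝ) (s : ℕ) (v : V) (t : ℝ) : ℝ :=
  univ.sup' univ_nonempty fun w => L v t - L w t - (2 * (s : ℝ) + 1) * κ * (G.dist v w)

/-- The global skew `𝒢(t) = max_{v,w ∈ V} |L_v(t) - L_w(t)|`. -/
noncomputable def GSkew [Fintype V] [Nonempty V] (L : V → ℝ → ℝ) (t : ℝ) : ℝ :=
  univ.sup' univ_nonempty fun p : V × V => |L p.1 t - L p.2 t|

namespace GCS15

/-- second vertex on a geodesic -/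
lemma exists_adj_dist (G : SimpleGraph V) (hconn : G.Connected) {v w : V} (h : v ≠ w) :
    ∃ u, G.Adj v u ∧ G.dist u w + 1 = G.dist v w := by
  obtain ⟨p, hp⟩ := (hconn v w).exists_walk_length_eq_dist
  have hnil : ¬ p.Nil := by
    rw [SimpleGraph.Walk.nil_iff_length_eq]
    intro h0
    exact h (SimpleGraph.Walk.eq_of_length_eq_zero h0)
  refine ⟨p.getVert 1, (p.adj_snd hnil : G.Adj v (p.getVert 1)), ?_⟩
  have h1 : G.dist (p.getVert 1) w ≤ p.tail.length := by
    simpa using SimpleGraph.dist_le p.tail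
  have h1' : p.tail.length + 1 = p.length := SimpleGraph.Walk.length_tail_add_one hnil
  have h2 : G.dist v w ≤ G.dist v (p.getVert 1) + G.dist (p.getVert 1) w :=
    hconn.dist_triangle
  have h3 : G.dist v (p.getVert 1) ≤ 1 := by
    rw [SimpleGraph.dist_eq_one_iff_adj.mpr (p.adj_snd hnil : G.Adj v (p.getVert 1))]
  omega

/-- last vertex before w on a geodesic from v -/
lemma exists_adj_dist' (G : SimpleGraph V) (hconn : G.Connected) {v w : V} (h : v ≠ w) :
    ∃ u, G.Adj w u ∧ G.dist v u + 1 = G.dist v w := by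
  obtain ⟨u, hadj, hd⟩ := exists_adj_dist G hconn (Ne.symm h)
  refine ⟨u, hadj, ?_⟩
  rw [show G.dist v u = G.dist u v from SimpleGraph.dist_comm,
    show G.dist v w = G.dist w v from SimpleGraph.dist_comm]
  exact hd

variable [Fintype V] [Nonempty V]

lemma cont_sup' (f : V → ℝ → ℝ) (hf : ∀ i, Continuous (f i)) :
    Continuous (fun t => univ.sup' univ_nonempty fun i => f i t) := by
  classical
  have : ∀ (s : Finset V) (hs : s.Nonempty),
      Continuous (fun t => s.sup' hs fun i => f i t) := by
    intro s hs
    induction hs using Finset.Nonempty.cons_induction with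
    | singleton a => simpa using hf a
    | cons a s ha hs ih =>
        refine Continuous.congr ((hf a).max ih) fun t => ?_
        rw [Finset.sup'_cons hs]
  exact this _ _

section basic

variable (G : SimpleGraph V) (L : V → ℝ → ℝ) (κ : ℝ)

lemma Psi_term_le (j : ℕ) (v w : V) (t : ℝ) :
    L w t - L v t - 2 * (j : ℝ) * κ * (G.dist v w) ≤ Psi G L κ j v t := by
  rw [Psi]
  exact Finset.le_sup' (fun w => L w t - L v t - 2 * (j : ℝ) * κ * (G.dist v w)) (mem_univ w)

lemma Psi_nonneg (j : ℕ) (v : V) (t : ℝ) : 0 ≤ Psi G L κ j v t := by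
  have := Psi_term_le G L κ j v v t
  simpa [SimpleGraph.dist_self] using this

lemma Xi_term_le (j : ℕ) (v w : V) (t : ℝ) :
    L v t - L w t - (2 * (j : ℝ) + 1) * κ * (G.dist v w) ≤ Xi G L κ j v t := by
  rw [Xi]
  exact Finset.le_sup' (fun w => L v t - L w t - (2 * (j : ℝ) + 1) * κ * (G.dist v w)) (mem_univ w)

lemma Xi_nonneg (j : ℕ) (v : V) (t : ℝ) : 0 ≤ Xi G L κ j v t := by
  have := Xi_term_le G L κ j v v t
  simpa [SimpleGraph.dist_self] using this

lemma Psi_le_PsiMax (j : ℕ) (v : V) (t : ℝ) : Psi G L κ j v t ≤ PsiMax G L κ j t := by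
  rw [PsiMax]
  exact Finset.le_sup' (fun v => Psi G L κ j v t) (mem_univ v)

lemma PsiMax_nonneg (j : ℕ) (t : ℝ) : 0 ≤ PsiMax G L κ j t :=
  le_trans (Psi_nonneg G L κ j Classical.ofNonempty t)
    (Psi_le_PsiMax G L κ j Classical.ofNonempty t)

lemma Xi_le_PsiMax (hκ : 0 < κ) (j : ℕ) (v : V) (t : ℝ) :
    Xi G L κ j v t ≤ PsiMax G L κ j t := by
  rw [Xi]
  apply sup'_le
  intro w _
  have h1 : L v t - L w t - 2 * (j : ℝ) * κ * (G.dist w v) ≤ Psi G L κ j w t :=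
    Psi_term_le G L κ j w v t
  have h2 : Psi G L κ j w t ≤ PsiMax G L κ j t := Psi_le_PsiMax G L κ j w t
  have hd : (G.dist w v : ℝ) = (G.dist v w : ℝ) := by
    rw [SimpleGraph.dist_comm]
  have hdn : (0:ℝ) ≤ κ * (G.dist v w : ℝ) := by positivity
  rw [hd] at h1
  linarith [h1, h2, hdn]

lemma budget (hconn : G.Connected) (hκ : 0 < κ) (j : ℕ) (v : V) (t : ℝ) :
    Psi G L κ (j+1) v t + Xi G L κ j v t ≤ PsiMax G L κ j t := by
  obtain ⟨w₁, _, hw₁⟩ := exists_mem_eq_sup' (univ_nonempty (α := V))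
    (fun w => L w t - L v t - 2 * (((j:ℕ)+1 : ℕ) : ℝ) * κ * (G.dist v w))
  obtain ⟨w₂, _, hw₂⟩ := exists_mem_eq_sup' (univ_nonempty (α := V))
    (fun w => L v t - L w t - (2 * (j:ℝ) + 1) * κ * (G.dist v w))
  have hPsi : Psi G L κ (j+1) v t = L w₁ t - L v t - 2 * (((j:ℕ)+1:ℕ) : ℝ) * κ * (G.dist v w₁) := by
    rw [Psi]; exact hw₁
  have hXi : Xi G L κ j v t = L v t - L w₂ t - (2 * (j:ℝ) + 1) * κ * (G.dist v w₂) := by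
    rw [Xi]; exact hw₂
  have tri : (G.dist w₂ w₁ : ℝ) ≤ (G.dist w₂ v : ℝ) + (G.dist v w₁ : ℝ) := by
    exact_mod_cast hconn.dist_triangle
  have hcomm : (G.dist w₂ v : ℝ) = (G.dist v w₂ : ℝ) := by rw [SimpleGraph.dist_comm]
  have h1 : L w₁ t - L w₂ t - 2 * (j:ℝ) * κ * (G.dist w₂ w₁) ≤ Psi G L κ j w₂ t :=
    Psi_term_le G L κ j w₂ w₁ t
  have h2 : Psi G L κ j w₂ t ≤ PsiMax G L κ j t := Psi_le_PsiMax G L κ j w₂ t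
  have hd1 : (0:ℝ) ≤ (G.dist v w₁ : ℝ) := Nat.cast_nonneg _
  have hd2 : (0:ℝ) ≤ (G.dist v w₂ : ℝ) := Nat.cast_nonneg _
  have hj : (0:ℝ) ≤ (j:ℝ) := Nat.cast_nonneg _
  have h3 : 2 * (j:ℝ) * κ * (G.dist w₂ w₁ : ℝ) ≤
      2 * (j:ℝ) * κ * ((G.dist w₂ v : ℝ) + (G.dist v w₁ : ℝ)) := by
    apply mul_le_mul_of_nonneg_left tri
    positivity
  have hp1 : (0:ℝ) ≤ κ * (G.dist v w₁ : ℝ) := by positivity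
  have hp2 : (0:ℝ) ≤ κ * (G.dist v w₂ : ℝ) := by positivity
  rw [hPsi, hXi]
  push_cast at h3 hPsi hXi ⊢
  rw [hcomm] at h3
  nlinarith [h1, h2, h3, hp1, hp2]

lemma sup'_slope {f : V → ℝ → ℝ} {τ r : ℝ} (hd : ∀ w, DifferentiableAt ℝ (f w) τ)
    (hb : ∀ w : V, f w τ = (univ.sup' univ_nonempty fun w' => f w' τ) → deriv (f w) τ < r) :
    ∀ᶠ x in nhdsWithin τ (Set.Ioi τ),
      (univ.sup' univ_nonempty fun w => f w x) ≤
        (univ.sup' univ_nonempty fun w => f w τ) + r * (x - τ) := by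
  have key : ∀ w : V, ∀ᶠ x in nhdsWithin τ (Set.Ioi τ),
      f w x ≤ (univ.sup' univ_nonempty fun w' => f w' τ) + r * (x - τ) := by
    intro w
    by_cases hw : f w τ = (univ.sup' univ_nonempty fun w' => f w' τ)
    · have hder : HasDerivAt (f w) (deriv (f w) τ) τ := (hd w).hasDerivAt
      have hslope : Filter.Tendsto (slope (f w) τ) (nhdsWithin τ (Set.Ioi τ))
          (nhds (deriv (f w) τ)) :=
        (hasDerivAt_iff_tendsto_slope.mp hder).mono_left
          (nhdsWithin_mono _ fun x hx => ne_of_gt hx)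
      have hev := hslope.eventually_lt_const (hb w hw)
      filter_upwards [hev, self_mem_nhdsWithin] with x hx hx'
      have hxτ : (0:ℝ) < x - τ := sub_pos.mpr hx'
      have : f w x - f w τ < r * (x - τ) := by
        have := (div_lt_iff₀ hxτ).mp (by simpa [slope_def_field] using hx)
        linarith
      linarith [hw.ge, this]
    · have hlt : f w τ < (univ.sup' univ_nonempty fun w' => f w' τ) :=
        lt_of_le_of_ne (Finset.le_sup' (fun w' => f w' τ) (mem_univ w)) hw
      have hcont : Filter.Tendsto
          (fun x => f w x - ((univ.sup' univ_nonempty fun w' => f w' τ) + r * (x - τ)))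
          (nhdsWithin τ (Set.Ioi τ))
          (nhds (f w τ - (univ.sup' univ_nonempty fun w' => f w' τ))) := by
        have h1 : Filter.Tendsto (f w) (nhdsWithin τ (Set.Ioi τ)) (nhds (f w τ)) :=
          ((hd w).continuousAt.tendsto).mono_left nhdsWithin_le_nhds
        have h2 : Filter.Tendsto (fun x => (univ.sup' univ_nonempty fun w' => f w' τ) + r * (x - τ))
            (nhdsWithin τ (Set.Ioi τ))
            (nhds ((univ.sup' univ_nonempty fun w' => f w' τ) + r * (τ - τ))) := by
          apply Filter.Tendsto.mono_left _ nhdsWithin_le_nhds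
          exact Continuous.tendsto (by continuity) τ
        simpa using h1.sub h2
      have := hcont.eventually_lt_const (by linarith :
        f w τ - (univ.sup' univ_nonempty fun w' => f w' τ) < 0)
      filter_upwards [this] with x hx
      linarith
  have hall := (Filter.eventually_all_finset (univ : Finset V)).mpr (fun w _ => key w)
  filter_upwards [hall] with x hx
  exact Finset.sup'_le _ _ fun w _ => hx w (mem_univ w)

variable {G : SimpleGraph V} {L : V → ℝ → ℝ} {κ ρ μ : ℝ}

/-- max-achieving far node for `Ψ_v` is in slow mode -/
lemma Psi_argmax_slow (hconn : G.Connected) (hκ : 0 < κ) (j : ℕ) (v : V) (τ : ℝ)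
    {w : V} (hw : w ≠ v)
    (hmax : Psi G L κ j v τ = L w τ - L v τ - 2 * (j:ℝ) * κ * (G.dist v w)) :
    slowCond G L κ w τ := by
  refine ⟨j, ?_, ?_⟩
  · obtain ⟨u, hadj, hdu⟩ := exists_adj_dist' G hconn (fun h => hw h.symm)
    refine ⟨u, hadj, ?_⟩
    have h1 : L u τ - L v τ - 2 * (j:ℝ) * κ * (G.dist v u) ≤ Psi G L κ j v τ :=
      Psi_term_le G L κ j v u τ
    rw [hmax] at h1
    have hcast : (G.dist v u : ℝ) + 1 = (G.dist v w : ℝ) := by exact_mod_cast hdu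
    have hprod : 2 * (j:ℝ) * κ * (G.dist v u : ℝ) + 2 * (j:ℝ) * κ
        = 2 * (j:ℝ) * κ * (G.dist v w : ℝ) := by rw [← hcast]; ring
    linarith [h1, hprod]
  · intro y hy
    have h1 : L y τ - L v τ - 2 * (j:ℝ) * κ * (G.dist v y) ≤ Psi G L κ j v τ :=
      Psi_term_le G L κ j v y τ
    rw [hmax] at h1
    have tri : (G.dist v y : ℝ) ≤ (G.dist v w : ℝ) + 1 := by
      have h2 : G.dist v y ≤ G.dist v w + G.dist w y := hconn.dist_triangle
      have h3 : G.dist w y = 1 := SimpleGraph.dist_eq_one_iff_adj.mpr hy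
      exact_mod_cast h2.trans_eq (by rw [h3])
    have hjk : (0:ℝ) ≤ 2 * (j:ℝ) * κ := by positivity
    have hprod : 2 * (j:ℝ) * κ * (G.dist v y : ℝ)
        ≤ 2 * (j:ℝ) * κ * (G.dist v w : ℝ) + 2 * (j:ℝ) * κ := by nlinarith [mul_le_mul_of_nonneg_left tri hjk]
    linarith [h1, hprod]

/-- max-achieving trailing node for `Ξ_v` is in fast mode -/
lemma Xi_argmax_fast (hconn : G.Connected) (hκ : 0 < κ) (j : ℕ) (v : V) (τ : ℝ)
    {w : V} (hw : w ≠ v)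
    (hmax : Xi G L κ j v τ = L v τ - L w τ - (2 * (j:ℝ) + 1) * κ * (G.dist v w)) :
    fastCond G L κ w τ := by
  refine ⟨j, ?_, ?_⟩
  · obtain ⟨u, hadj, hdu⟩ := exists_adj_dist' G hconn (fun h => hw h.symm)
    refine ⟨u, hadj, ?_⟩
    have h1 : L v τ - L u τ - (2 * (j:ℝ) + 1) * κ * (G.dist v u) ≤ Xi G L κ j v τ :=
      Xi_term_le G L κ j v u τ
    rw [hmax] at h1
    have hcast : (G.dist v u : ℝ) + 1 = (G.dist v w : ℝ) := by exact_mod_cast hdu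
    have hprod : (2 * (j:ℝ) + 1) * κ * (G.dist v u : ℝ) + (2 * (j:ℝ) + 1) * κ
        = (2 * (j:ℝ) + 1) * κ * (G.dist v w : ℝ) := by rw [← hcast]; ring
    linarith [h1, hprod]
  · intro y hy
    have h1 : L v τ - L y τ - (2 * (j:ℝ) + 1) * κ * (G.dist v y) ≤ Xi G L κ j v τ :=
      Xi_term_le G L κ j v y τ
    rw [hmax] at h1
    have tri : (G.dist v y : ℝ) ≤ (G.dist v w : ℝ) + 1 := by
      have h2 : G.dist v y ≤ G.dist v w + G.dist w y := hconn.dist_triangle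
      have h3 : G.dist w y = 1 := SimpleGraph.dist_eq_one_iff_adj.mpr hy
      exact_mod_cast h2.trans_eq (by rw [h3])
    have hjk : (0:ℝ) ≤ (2 * (j:ℝ) + 1) * κ := by positivity
    have hprod : (2 * (j:ℝ) + 1) * κ * (G.dist v y : ℝ)
        ≤ (2 * (j:ℝ) + 1) * κ * (G.dist v w : ℝ) + (2 * (j:ℝ) + 1) * κ := by
      nlinarith [mul_le_mul_of_nonneg_left tri hjk]
    linarith [h1, hprod]

/-- if `Ξ_v = 0` and `Ψ_v > 0` then either `v` is fast or it is `κ`-below the max. -/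
lemma cap_dichotomy (hconn : G.Connected) (hκ : 0 < κ) (j : ℕ) (v : V) (τ : ℝ)
    (hXi0 : Xi G L κ j v τ = 0) (hpos : 0 < Psi G L κ (j+1) v τ) :
    fastCond G L κ v τ ∨ Psi G L κ (j+1) v τ + κ ≤ PsiMax G L κ (j+1) τ := by
  by_cases hex : ∃ x, G.Adj v x ∧ (2 * (j:ℝ) + 1) * κ ≤ L x τ - L v τ
  · left
    refine ⟨j, hex, fun y hy => ?_⟩
    have h1 : L v τ - L y τ - (2 * (j:ℝ) + 1) * κ * (G.dist v y) ≤ Xi G L κ j v τ :=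
      Xi_term_le G L κ j v y τ
    rw [hXi0] at h1
    have h3 : (G.dist v y : ℝ) = 1 := by
      exact_mod_cast SimpleGraph.dist_eq_one_iff_adj.mpr hy
    rw [h3] at h1
    linarith
  · right
    push_neg at hex
    obtain ⟨w, _, hw⟩ := exists_mem_eq_sup' (univ_nonempty (α := V))
      (fun w => L w τ - L v τ - 2 * (((j:ℕ)+1:ℕ) : ℝ) * κ * (G.dist v w))
    have hmax : Psi G L κ (j+1) v τ
        = L w τ - L v τ - 2 * (((j:ℕ)+1:ℕ) : ℝ) * κ * (G.dist v w) := by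
      rw [Psi]; exact hw
    have hwv : w ≠ v := by
      intro h
      rw [h] at hmax
      simp [SimpleGraph.dist_self] at hmax
      rw [hmax] at hpos
      exact lt_irrefl _ hpos
    obtain ⟨u, hadj, hdu⟩ := exists_adj_dist G hconn (fun h => hwv h.symm)
    have hu : L u τ - L v τ < (2 * (j:ℝ) + 1) * κ := hex u hadj
    have h1 : L w τ - L u τ - 2 * (((j:ℕ)+1:ℕ) : ℝ) * κ * (G.dist u w) ≤ Psi G L κ (j+1) u τ :=
      Psi_term_le G L κ (j+1) u w τ
    have h2 : Psi G L κ (j+1) u τ ≤ PsiMax G L κ (j+1) τ := Psi_le_PsiMax G L κ (j+1) u τ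
    have hcast : (G.dist u w : ℝ) + 1 = (G.dist v w : ℝ) := by exact_mod_cast hdu
    have hprod : 2 * ((j:ℝ)+1) * κ * (G.dist u w : ℝ) + 2 * ((j:ℝ)+1) * κ
        = 2 * ((j:ℝ)+1) * κ * (G.dist v w : ℝ) := by rw [← hcast]; ring
    push_cast at hmax h1
    linarith [h1, h2, hu, hmax, hprod]

end basic

section slopes

variable {G : SimpleGraph V} {L : V → ℝ → ℝ} {κ ρ μ : ℝ}

lemma deriv_term (hdiff : ∀ v, Differentiable ℝ (L v)) (v w : V) (C τ : ℝ) :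
    deriv (fun t => L w t - L v t - C) τ = deriv (L w) τ - deriv (L v) τ := by
  rw [deriv_sub_const, deriv_fun_sub ((hdiff w).differentiableAt) ((hdiff v).differentiableAt)]

lemma Psi_slope (hconn : G.Connected) (hκ : 0 < κ) (hdiff : ∀ v, Differentiable ℝ (L v))
    (hslowI : ∀ v u, 0 ≤ u → slowCond G L κ v u → deriv (L v) u ≤ 1 + ρ)
    (j : ℕ) (v : V) {τ : ℝ} (hτ : 0 ≤ τ) (hpos : 0 < Psi G L κ j v τ)
    {r : ℝ} (hr : 1 + ρ - deriv (L v) τ < r) :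
    ∀ᶠ x in nhdsWithin τ (Set.Ioi τ), Psi G L κ j v x ≤ Psi G L κ j v τ + r * (x - τ) := by
  have hd : ∀ w : V, DifferentiableAt ℝ
      (fun t => L w t - L v t - 2 * (j:ℝ) * κ * (G.dist v w)) τ := fun w =>
    (((hdiff w).differentiableAt).sub ((hdiff v).differentiableAt)).sub_const _
  have key := sup'_slope (f := fun w t => L w t - L v t - 2 * (j:ℝ) * κ * (G.dist v w))
    (τ := τ) (r := r) hd ?_
  · simpa [Psi] using key
  · intro w hw
    rw [deriv_term hdiff]
    have hwv : w ≠ v := by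
      intro h
      subst h
      rw [show (L w τ - L w τ - 2 * (j:ℝ) * κ * (G.dist w w) : ℝ) = 0 by
        simp [SimpleGraph.dist_self]] at hw
      rw [show Psi G L κ j w τ =
        (univ.sup' univ_nonempty fun w' => L w' τ - L w τ - 2 * (j:ℝ) * κ * (G.dist w w')) from rfl]
        at hpos
      rw [← hw] at hpos
      exact lt_irrefl _ hpos
    have hslow : slowCond G L κ w τ := by
      apply Psi_argmax_slow hconn hκ j v τ hwv
      rw [Psi]
      exact hw.symm
    have := hslowI w τ hτ hslow
    linarith

lemma Xi_slope_pos (hconn : G.Connected) (hκ : 0 < κ) (hdiff : ∀ v, Differentiable ℝ (L v))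
    (hfastI : ∀ v u, 0 ≤ u → fastCond G L κ v u → 1 + μ ≤ deriv (L v) u)
    (j : ℕ) (v : V) {τ : ℝ} (hτ : 0 ≤ τ) (hpos : 0 < Xi G L κ j v τ)
    {r : ℝ} (hr : deriv (L v) τ - (1 + μ) < r) :
    ∀ᶠ x in nhdsWithin τ (Set.Ioi τ), Xi G L κ j v x ≤ Xi G L κ j v τ + r * (x - τ) := by
  have hd : ∀ w : V, DifferentiableAt ℝ
      (fun t => L v t - L w t - (2 * (j:ℝ) + 1) * κ * (G.dist v w)) τ := fun w =>
    (((hdiff v).differentiableAt).sub ((hdiff w).differentiableAt)).sub_const _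
  have key := sup'_slope (f := fun w t => L v t - L w t - (2 * (j:ℝ) + 1) * κ * (G.dist v w))
    (τ := τ) (r := r) hd ?_
  · simpa [Xi] using key
  · intro w hw
    have hder : deriv (fun t => L v t - L w t - (2 * (j:ℝ) + 1) * κ * (G.dist v w)) τ
        = deriv (L v) τ - deriv (L w) τ := deriv_term hdiff w v _ τ
    rw [hder]
    have hwv : w ≠ v := by
      intro h
      subst h
      simp only [SimpleGraph.dist_self, Nat.cast_zero, mul_zero, sub_zero, sub_self] at hw
      rw [show Xi G L κ j w τ =
        (univ.sup' univ_nonempty fun w' => L w τ - L w' τ - (2 * (j:ℝ) + 1) * κ * (G.dist w w'))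
        from rfl] at hpos
      rw [← hw] at hpos
      exact lt_irrefl _ hpos
    have hfast : fastCond G L κ w τ := by
      apply Xi_argmax_fast hconn hκ j v τ hwv
      rw [Xi]
      exact hw.symm
    have := hfastI w τ hτ hfast
    linarith

lemma Xi_slope_zero (hconn : G.Connected) (hκ : 0 < κ) (hdiff : ∀ v, Differentiable ℝ (L v))
    (hfastI : ∀ v u, 0 ≤ u → fastCond G L κ v u → 1 + μ ≤ deriv (L v) u)
    (j : ℕ) (v : V) {τ : ℝ} (hτ : 0 ≤ τ) (hzero : Xi G L κ j v τ = 0)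
    {r : ℝ} (hr : max 0 (deriv (L v) τ - (1 + μ)) < r) :
    ∀ᶠ x in nhdsWithin τ (Set.Ioi τ), Xi G L κ j v x ≤ Xi G L κ j v τ + r * (x - τ) := by
  have hd : ∀ w : V, DifferentiableAt ℝ
      (fun t => L v t - L w t - (2 * (j:ℝ) + 1) * κ * (G.dist v w)) τ := fun w =>
    (((hdiff v).differentiableAt).sub ((hdiff w).differentiableAt)).sub_const _
  have key := sup'_slope (f := fun w t => L v t - L w t - (2 * (j:ℝ) + 1) * κ * (G.dist v w))
    (τ := τ) (r := r) hd ?_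
  · simpa [Xi] using key
  · intro w hw
    have hder : deriv (fun t => L v t - L w t - (2 * (j:ℝ) + 1) * κ * (G.dist v w)) τ
        = deriv (L v) τ - deriv (L w) τ := deriv_term hdiff w v _ τ
    rw [hder]
    by_cases hwv : w = v
    · subst hwv
      simp only [sub_self]
      exact lt_of_le_of_lt (le_max_left _ _) hr
    · have hfast : fastCond G L κ w τ := by
        apply Xi_argmax_fast hconn hκ j v τ hwv
        rw [Xi]
        exact hw.symm
      have := hfastI w τ hτ hfast
      have h2 := le_max_right (0:ℝ) (deriv (L v) τ - (1 + μ))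
      linarith

/-- combined slope bound for `Ψ_v^{j+1} + c'·Ξ_v^j` -/
lemma K_slope (hconn : G.Connected) (hκ : 0 < κ) (hdiff : ∀ v, Differentiable ℝ (L v))
    (hrate : ∀ v u, 0 ≤ u → 1 ≤ deriv (L v) u ∧ deriv (L v) u ≤ (1 + μ) * (1 + ρ))
    (hfastI : ∀ v u, 0 ≤ u → fastCond G L κ v u → 1 + μ ≤ deriv (L v) u)
    (hslowI : ∀ v u, 0 ≤ u → slowCond G L κ v u → deriv (L v) u ≤ 1 + ρ)
    (j : ℕ) {c' : ℝ} (hc0 : 0 ≤ c') (hc1 : c' ≤ 1) (v : V) {τ : ℝ} (hτ : 0 ≤ τ)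
    (hΨ : 0 < Psi G L κ (j+1) v τ)
    (hgood : 0 < Xi G L κ j v τ ∨ fastCond G L κ v τ)
    {r : ℝ} (hr : ρ - c' * μ < r) :
    ∀ᶠ x in nhdsWithin τ (Set.Ioi τ),
      Psi G L κ (j+1) v x + c' * Xi G L κ j v x ≤
        (Psi G L κ (j+1) v τ + c' * Xi G L κ j v τ) + r * (x - τ) := by
  set D := deriv (L v) τ with hD
  have hD1 : 1 ≤ D := (hrate v τ hτ).1
  set η : ℝ := (r - (ρ - c' * μ)) / 4 with hη
  have hηpos : 0 < η := by rw [hη]; linarith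
  have h₁ := Psi_slope hconn hκ hdiff hslowI (j+1) v hτ hΨ
    (r := 1 + ρ - D + η) (by linarith)
  have hsum : ∀ r₂ : ℝ, D - (1+μ) + η ≤ r₂ → r₂ ≤ D - (1+μ) + η →
      (1 + ρ - D + η) + c' * r₂ ≤ r := by
    intro r₂ hr₂ hr₂'
    have he : r₂ = D - (1+μ) + η := le_antisymm hr₂' hr₂
    rw [he]
    have hterm : (1 - c') * (D - 1) ≥ 0 := by
      apply mul_nonneg (by linarith) (by linarith)
    have : η * (1 + c') ≤ 2 * η := by nlinarith
    nlinarith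
  by_cases hXi : 0 < Xi G L κ j v τ
  · have h₂ := Xi_slope_pos hconn hκ hdiff hfastI j v hτ hXi
      (r := D - (1+μ) + η) (by linarith)
    filter_upwards [h₁, h₂, self_mem_nhdsWithin] with x hx1 hx2 hx3
    have hxτ : 0 ≤ x - τ := le_of_lt (sub_pos.mpr hx3)
    have hc'2 : c' * Xi G L κ j v x ≤ c' * (Xi G L κ j v τ + (D - (1+μ) + η) * (x - τ)) :=
      mul_le_mul_of_nonneg_left hx2 hc0
    have hfin := hsum (D - (1+μ) + η) le_rfl le_rfl
    nlinarith [hx1, hc'2, mul_le_mul_of_nonneg_right hfin hxτ]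
  · have hXi0 : Xi G L κ j v τ = 0 :=
      le_antisymm (le_of_not_gt hXi) (Xi_nonneg G L κ j v τ)
    have hfast : fastCond G L κ v τ := hgood.resolve_left hXi
    have hDμ : 1 + μ ≤ D := hfastI v τ hτ hfast
    have hmax : max 0 (D - (1+μ)) = D - (1+μ) := max_eq_right (by linarith)
    have h₂ := Xi_slope_zero hconn hκ hdiff hfastI j v hτ hXi0
      (r := D - (1+μ) + η) (by rw [hmax]; linarith)
    filter_upwards [h₁, h₂, self_mem_nhdsWithin] with x hx1 hx2 hx3
    have hxτ : 0 ≤ x - τ := le_of_lt (sub_pos.mpr hx3)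
    have hc'2 : c' * Xi G L κ j v x ≤ c' * (Xi G L κ j v τ + (D - (1+μ) + η) * (x - τ)) :=
      mul_le_mul_of_nonneg_left hx2 hc0
    have hfin := hsum (D - (1+μ) + η) le_rfl le_rfl
    nlinarith [hx1, hc'2, mul_le_mul_of_nonneg_right hfin hxτ]

end slopes

section generic

/-- Generic comparison: `f` stays below the `C`-slowly-decaying bound `g`,
given that at contact points `f` has forward slope `< -C`. -/
lemma decay_bound {f g : ℝ → ℝ} {a b C : ℝ} (hC : 0 ≤ C)
    (hf : ContinuousOn f (Set.Icc a b))
    (hgd : ∀ ⦃x y : ℝ⦄, a ≤ x → x ≤ y → y ≤ b → g x - C * (y - x) ≤ g y)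
    (hga : f a ≤ g a)
    (hs : ∀ τ, a ≤ τ → τ < b → g τ < f τ → ∀ r : ℝ, -C < r →
      ∀ᶠ x in nhdsWithin τ (Set.Ioi τ), f x ≤ f τ + r * (x - τ)) :
    ∀ t, a ≤ t → t ≤ b → f t ≤ g t := by
  have main : ∀ ε : ℝ, 0 < ε → ∀ u, a ≤ u → u ≤ b → f u ≤ g u + ε * (1 + (u - a)) := by
    intro ε hε
    by_contra hcon
    push_neg at hcon
    obtain ⟨u₀, hu₀a, hu₀b, hu₀⟩ := hcon
    set Vs : Set ℝ := {x | (a ≤ x ∧ x ≤ b) ∧ g x + ε * (1 + (x - a)) < f x} with hVs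
    have hVne : Vs.Nonempty := ⟨u₀, ⟨hu₀a, hu₀b⟩, hu₀⟩
    have hVbdd : BddBelow Vs := ⟨a, fun x hx => hx.1.1⟩
    set τ := sInf Vs with hτdef
    have hτa : a ≤ τ := le_csInf hVne (fun x hx => hx.1.1)
    have hτb : τ ≤ b := le_trans (csInf_le hVbdd ⟨⟨hu₀a, hu₀b⟩, hu₀⟩) hu₀b
    have hτIcc : τ ∈ Set.Icc a b := ⟨hτa, hτb⟩
    have hbelow : ∀ x, a ≤ x → x ≤ b → x < τ → f x ≤ g x + ε * (1 + (x - a)) := by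
      intro x hxa hxb hxτ
      by_contra hx
      push_neg at hx
      exact absurd (csInf_le hVbdd ⟨⟨hxa, hxb⟩, hx⟩) (not_le.mpr hxτ)
    -- Claim A : g τ + ε(1+(τ-a)) ≤ f τ
    have claimA : g τ + ε * (1 + (τ - a)) ≤ f τ := by
      by_contra hA
      push_neg at hA
      set gap := g τ + ε * (1 + (τ - a)) - f τ with hgap
      have hgappos : 0 < gap := by rw [hgap]; linarith
      have hev1 : ∀ᶠ x in nhdsWithin τ (Set.Icc a b), f x < f τ + gap / 2 :=
        (hf τ hτIcc).tendsto.eventually_lt_const (by linarith)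
      have hev2 : ∀ᶠ x in nhdsWithin τ (Set.Icc a b),
          C * (x - τ) + ε * (τ - x) < gap / 2 := by
        have hcont : Filter.Tendsto (fun x => C * (x - τ) + ε * (τ - x))
            (nhdsWithin τ (Set.Icc a b)) (nhds (C * (τ - τ) + ε * (τ - τ))) :=
          (Continuous.tendsto (by fun_prop) τ).mono_left nhdsWithin_le_nhds
        apply hcont.eventually_lt_const
        simpa using (by linarith : (0:ℝ) < gap/2)
      have hev := hev1.and hev2
      rw [Filter.Eventually] at hev
      obtain ⟨δ, hδpos, hδ⟩ := Metric.mem_nhdsWithin_iff.mp hev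
      obtain ⟨x, hxV, hxδ⟩ := Real.lt_sInf_add_pos hVne hδpos
      have hxτ : τ ≤ x := csInf_le hVbdd hxV
      have hxIcc : x ∈ Set.Icc a b := ⟨hxV.1.1, hxV.1.2⟩
      have hxball : x ∈ Metric.ball τ δ := by
        rw [Real.ball_eq_Ioo]
        constructor <;> [linarith; linarith [hxδ]]
      have hxmem : f x < f τ + gap / 2 ∧ C * (x - τ) + ε * (τ - x) < gap / 2 :=
        hδ ⟨hxball, hxIcc⟩
      have hx1 := hxmem.1
      have hx2 := hxmem.2
      have hgx : g τ - C * (x - τ) ≤ g x := hgd hτa hxτ hxV.1.2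
      have : f x < g x + ε * (1 + (x - a)) := by
        have := hxV.2
        nlinarith [hx1, hx2, hgx]
      exact absurd hxV.2 (not_lt.mpr (le_of_lt this))
    -- Claim B : f τ ≤ g τ + ε(1+(τ-a))
    have claimB : f τ ≤ g τ + ε * (1 + (τ - a)) := by
      rcases eq_or_lt_of_le hτa with heq | hlt
      · rw [← heq]
        have : (0:ℝ) < ε * (1 + (a - a)) := by simpa using hε
        linarith [hga]
      · -- approach from the left
        have hne : (nhdsWithin τ (Set.Ico a τ)).NeBot := by
          rw [nhdsWithin_Ico_eq_nhdsLT hlt]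
          infer_instance
        have htf : Filter.Tendsto f (nhdsWithin τ (Set.Ico a τ)) (nhds (f τ)) :=
          ((hf τ hτIcc).mono (fun x hx => ⟨hx.1, le_trans (le_of_lt hx.2) hτb⟩)).tendsto
        have htg : Filter.Tendsto (fun x => g τ + C * (τ - x) + ε * (1 + (x - a)))
            (nhdsWithin τ (Set.Ico a τ))
            (nhds (g τ + C * (τ - τ) + ε * (1 + (τ - a)))) :=
          (Continuous.tendsto (by fun_prop) τ).mono_left nhdsWithin_le_nhds
        have hle : ∀ᶠ x in nhdsWithin τ (Set.Ico a τ),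
            f x ≤ g τ + C * (τ - x) + ε * (1 + (x - a)) := by
          filter_upwards [self_mem_nhdsWithin] with x hx
          have h1 := hbelow x hx.1 (le_trans (le_of_lt hx.2) hτb) hx.2
          have h2 : g x - C * (τ - x) ≤ g τ := hgd hx.1 (le_of_lt hx.2) hτb
          linarith
        have := le_of_tendsto_of_tendsto htf htg hle
        simpa using this
    have hgτfτ : g τ < f τ := by
      have : (0:ℝ) < ε * (1 + (τ - a)) := by
        apply mul_pos hε; linarith
      linarith [claimA]
    rcases lt_or_eq_of_le hτb with hτltb | hτeqb
    · -- interior: use slope hypothesis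
      have hev := hs τ hτa hτltb hgτfτ (-C + ε) (by linarith)
      have hnoV : ∀ᶠ x in nhdsWithin τ (Set.Ioi τ), x ∉ Vs := by
        filter_upwards [hev, self_mem_nhdsWithin] with x hx hx'
        intro hxV
        have hxτ : τ < x := hx'
        have h2 : g τ - C * (x - τ) ≤ g x := hgd hτa (le_of_lt hxτ) hxV.1.2
        have h3 : f x ≤ f τ + (-C + ε) * (x - τ) := hx
        have h4 := hxV.2
        nlinarith [claimB]
      -- but Vs has points arbitrarily close to τ from the right
      have hfreq : ∃ᶠ x in nhdsWithin τ (Set.Ioi τ), x ∈ Vs := by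
        rw [Filter.frequently_iff]
        intro s hms
        obtain ⟨u, hu, huss⟩ := mem_nhdsGT_iff_exists_Ioo_subset.mp hms
        obtain ⟨x, hxV, hxδ⟩ := Real.lt_sInf_add_pos hVne
          (show (0:ℝ) < min (u - τ) 1 by
            simp only [lt_min_iff]
            exact ⟨by simpa using hu, one_pos⟩)
        have hxτ : τ ≤ x := csInf_le hVbdd hxV
        have hxττ : τ ≠ x := by
          intro h
          rw [← h] at hxV
          have := hxV.2
          linarith [claimB]
        refine ⟨x, huss ⟨lt_of_le_of_ne hxτ hxττ, ?_⟩, hxV⟩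
        have : x < τ + min (u - τ) 1 := hxδ
        have h5 : min (u - τ) 1 ≤ u - τ := min_le_left _ _
        linarith
      obtain ⟨x, hx1, hx2⟩ := (hfreq.and_eventually hnoV).exists
      exact hx2 hx1
    · -- τ = b : every violating point equals b, contradicting claimB
      obtain ⟨x, hxV⟩ := hVne
      have h1 : τ ≤ x := csInf_le hVbdd hxV
      have h2 : x ≤ b := hxV.1.2
      have hxb : x = τ := by rw [hτeqb]; linarith
      rw [hxb] at hxV
      exact absurd hxV.2 (not_lt.mpr claimB)
  -- conclude
  intro t hta htb
  by_contra hft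
  push_neg at hft
  have hpos : 0 < 1 + (t - a) := by linarith
  set ε := (f t - g t) / (2 * (1 + (t - a))) with hε
  have hεpos : 0 < ε := by
    apply div_pos (by linarith) (by linarith)
  have := main ε hεpos t hta htb
  have hcalc : ε * (1 + (t - a)) = (f t - g t) / 2 := by
    rw [hε]; field_simp
  rw [hcalc] at this
  linarith

end generic

section continuity

variable {G : SimpleGraph V} {L : V → ℝ → ℝ} {κ : ℝ}

lemma cont_Psi (hdiff : ∀ v, Differentiable ℝ (L v)) (j : ℕ) (v : V) :
    Continuous (Psi G L κ j v) := by
  apply cont_sup'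
  intro w
  exact (((hdiff w).continuous.sub (hdiff v).continuous).sub continuous_const)

lemma cont_Xi (hdiff : ∀ v, Differentiable ℝ (L v)) (j : ℕ) (v : V) :
    Continuous (Xi G L κ j v) := by
  apply cont_sup'
  intro w
  exact (((hdiff v).continuous.sub (hdiff w).continuous).sub continuous_const)

lemma cont_PsiMax (hdiff : ∀ v, Differentiable ℝ (L v)) (j : ℕ) :
    Continuous (PsiMax G L κ j) := by
  apply cont_sup'
  intro v
  exact cont_Psi hdiff j v

end continuity

section step

variable {G : SimpleGraph V} {L : V → ℝ → ℝ} {κ ρ μ : ℝ}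

set_option maxHeartbeats 1000000 in
/-- The single-level decay step. -/
lemma step (hconn : G.Connected) (hκ : 0 < κ) (hρ : 0 < ρ) (hρμ : ρ < μ)
    (hdiff : ∀ v, Differentiable ℝ (L v))
    (hrate : ∀ v u, 0 ≤ u → 1 ≤ deriv (L v) u ∧ deriv (L v) u ≤ (1 + μ) * (1 + ρ))
    (hfastI : ∀ v u, 0 ≤ u → fastCond G L κ v u → 1 + μ ≤ deriv (L v) u)
    (hslowI : ∀ v u, 0 ≤ u → slowCond G L κ v u → deriv (L v) u ≤ 1 + ρ)
    (j : ℕ) (t0 ψ' : ℝ) (ht0 : 0 ≤ t0) (hψ' : 0 ≤ ψ')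
    (hbound : ∀ t, t0 ≤ t → PsiMax G L κ j t ≤ ψ') :
    ∀ t, t0 ≤ t → PsiMax G L κ (j+1) t ≤ max (ρ/μ * ψ') (ψ' - (μ - ρ) * (t - t0)) := by
  have hμ : 0 < μ := lt_trans hρ hρμ
  set c : ℝ := ρ / μ with hc
  have hc0 : 0 < c := div_pos hρ hμ
  have hc1 : c ≤ 1 := by
    rw [hc, div_le_one hμ]; linarith
  have hcμ : ρ - c * μ = 0 := by
    rw [hc]; field_simp; ring
  -- the potential K and its max Y
  set K : V → ℝ → ℝ := fun v t => Psi G L κ (j+1) v t + c * Xi G L κ j v t with hK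
  set Y : ℝ → ℝ := fun t => univ.sup' univ_nonempty (fun v => K v t) with hY
  set Φ : ℝ → ℝ := fun t => max (c * ψ') (ψ' - (μ - ρ) * (t - t0)) with hΦ
  have hKcont : ∀ v, Continuous (K v) := fun v =>
    (cont_Psi hdiff (j+1) v).add (continuous_const.mul (cont_Xi hdiff j v))
  have hYcont : Continuous Y := cont_sup' _ hKcont
  have hΦcont : Continuous Φ := by
    apply Continuous.max continuous_const
    fun_prop
  have hPsiK : ∀ v t, Psi G L κ (j+1) v t ≤ K v t := by
    intro v t
    have h := Xi_nonneg G L κ j v t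
    show Psi G L κ (j+1) v t ≤ Psi G L κ (j+1) v t + c * Xi G L κ j v t
    nlinarith [h, hc0]
  have hPsiMaxY : ∀ t, PsiMax G L κ (j+1) t ≤ Y t := by
    intro t
    rw [PsiMax, hY]
    exact Finset.sup'_le _ _ fun v _ =>
      le_trans (hPsiK v t) (Finset.le_sup' (fun v => K v t) (mem_univ v))
  have hKψ : ∀ v t, t0 ≤ t → K v t ≤ ψ' := by
    intro v t ht
    have h1 := budget G L κ hconn hκ j v t
    have h2 := hbound t ht
    have h3 := Xi_nonneg G L κ j v t
    have h4 : c * Xi G L κ j v t ≤ 1 * Xi G L κ j v t :=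
      mul_le_mul_of_nonneg_right hc1 h3
    show Psi G L κ (j+1) v t + c * Xi G L κ j v t ≤ ψ'
    nlinarith [h1, h2, h3, h4]
  have hAψ : ∀ v t, t0 ≤ t → Psi G L κ (j+1) v t + Xi G L κ j v t ≤ ψ' := by
    intro v t ht
    exact le_trans (budget G L κ hconn hκ j v t) (hbound t ht)
  have hΦc : ∀ t, c * ψ' ≤ Φ t := fun t => le_max_left _ _
  have hΦd : ∀ x y : ℝ, x ≤ y → Φ x ≤ Φ y + (μ - ρ) * (y - x) := by
    intro x y hxy
    show max (c * ψ') (ψ' - (μ - ρ) * (x - t0)) ≤ max (c * ψ') (ψ' - (μ - ρ) * (y - t0)) + (μ - ρ) * (y - x)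
    rcases le_total (c * ψ') (ψ' - (μ - ρ) * (x - t0)) with h | h
    · rw [max_eq_right h]
      have : ψ' - (μ - ρ) * (x - t0) = (ψ' - (μ - ρ) * (y - t0)) + (μ - ρ) * (y - x) := by ring
      rw [this]
      have := le_max_right (c * ψ') (ψ' - (μ - ρ) * (y - t0))
      linarith
    · rw [max_eq_left h]
      have h1 := le_max_left (c * ψ') (ψ' - (μ - ρ) * (y - t0))
      nlinarith [mul_nonneg (by linarith : (0:ℝ) ≤ μ - ρ) (by linarith : (0:ℝ) ≤ y - x)]
  -- main claim
  suffices hmain : ∀ t1, t0 ≤ t1 → Y t1 ≤ Φ t1 by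
    intro t ht
    exact le_trans (hPsiMaxY t) (hmain t ht)
  by_contra hcon
  push_neg at hcon
  obtain ⟨t1, ht1, hYt1⟩ := hcon
  -- maximize Y - Φ on [t0, t1]
  obtain ⟨τ, hτIcc, hτmax⟩ := isCompact_Icc.exists_isMaxOn
    (Set.nonempty_Icc.mpr ht1)
    ((hYcont.sub hΦcont).continuousOn : ContinuousOn (fun t => Y t - Φ t) (Set.Icc t0 t1))
  set M : ℝ := Y τ - Φ τ with hM
  have hMpos : 0 < M := by
    have h2 : Y t1 - Φ t1 ≤ Y τ - Φ τ := hτmax ⟨ht1, le_rfl⟩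
    show (0:ℝ) < Y τ - Φ τ
    linarith
  have hYle : ∀ σ, t0 ≤ σ → σ ≤ τ → Y σ ≤ Φ σ + M := by
    intro σ h1 h2
    have h3 : Y σ - Φ σ ≤ Y τ - Φ τ := hτmax ⟨h1, le_trans h2 hτIcc.2⟩
    show Y σ ≤ Φ σ + (Y τ - Φ τ)
    linarith
  have hτ0 : 0 ≤ τ := le_trans ht0 hτIcc.1
  -- the max-achieving node
  obtain ⟨v, _, hv⟩ := exists_mem_eq_sup' (univ_nonempty (α := V)) (fun v => K v τ)
  have hKv : K v τ = Φ τ + M := by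
    rw [hM]
    have : Y τ = K v τ := hv
    linarith [this]
  have hτt0 : t0 < τ := by
    rcases lt_or_eq_of_le hτIcc.1 with h | h
    · exact h
    · exfalso
      have h1 : Y τ ≤ ψ' := by
        rw [hY]
        exact Finset.sup'_le _ _ fun w _ => hKψ w τ hτIcc.1
      have h2 : Φ τ = ψ' := by
        rw [hΦ, ← h]
        simp only [sub_self, mul_zero, sub_zero]
        exact max_eq_right (by nlinarith [hc1, hψ', hc0])
      rw [hM, h2] at hMpos
      linarith
  -- Ψ_v(τ) > 0
  have hΨpos : 0 < Psi G L κ (j+1) v τ := by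
    rcases lt_or_eq_of_le (Psi_nonneg G L κ (j+1) v τ) with h | h
    · exact h
    · exfalso
      have h1 : K v τ = c * Xi G L κ j v τ := by
        show Psi G L κ (j+1) v τ + c * Xi G L κ j v τ = c * Xi G L κ j v τ
        rw [← h]; ring
      have h2 : Xi G L κ j v τ ≤ PsiMax G L κ j τ := Xi_le_PsiMax G L κ hκ j v τ
      have h3 := hbound τ hτIcc.1
      have h4 : K v τ ≤ c * ψ' := by
        rw [h1]
        exact mul_le_mul_of_nonneg_left (le_trans h2 h3) (le_of_lt hc0)
      have := hΦc τ
      rw [hKv] at h4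
      linarith
  -- τ is not itself a cap point
  have hncap : ¬ (Xi G L κ j v τ = 0 ∧ Psi G L κ (j+1) v τ + κ ≤ PsiMax G L κ (j+1) τ) := by
    rintro ⟨h0, hcap⟩
    have h1 : K v τ = Psi G L κ (j+1) v τ := by
      show Psi G L κ (j+1) v τ + c * Xi G L κ j v τ = Psi G L κ (j+1) v τ
      rw [h0]; ring
    have h2 : PsiMax G L κ (j+1) τ ≤ Y τ := hPsiMaxY τ
    have h3 : Y τ = Φ τ + M := by rw [hM]; ring_nf
    rw [h1] at hKv
    rw [h3] at h2
    linarith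
  -- the set of "anchor" times
  set Cs : Set ℝ := {σ | σ ∈ Set.Icc t0 τ ∧ (σ = t0 ∨ Psi G L κ (j+1) v σ = 0 ∨
      (Xi G L κ j v σ = 0 ∧ Psi G L κ (j+1) v σ + κ ≤ PsiMax G L κ (j+1) σ))} with hCs
  have hCsclosed : IsClosed Cs := by
    rw [hCs]
    apply IsClosed.inter isClosed_Icc
    apply IsClosed.union (isClosed_eq continuous_id continuous_const)
    apply IsClosed.union (isClosed_eq (cont_Psi hdiff (j+1) v) continuous_const)
    apply IsClosed.inter (isClosed_eq (cont_Xi hdiff j v) continuous_const)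
    exact isClosed_le ((cont_Psi hdiff (j+1) v).add continuous_const)
      (cont_PsiMax hdiff (j+1))
  have hCsne : Cs.Nonempty := ⟨t0, ⟨le_rfl, le_of_lt hτt0⟩, Or.inl rfl⟩
  have hCsbdd : BddAbove Cs := ⟨τ, fun x hx => hx.1.2⟩
  set σ' := sSup Cs with hσ'
  have hσ'mem : σ' ∈ Cs := hCsclosed.csSup_mem hCsne hCsbdd
  have hσ'τ : σ' ≤ τ := hσ'mem.1.2
  have hσ't0 : t0 ≤ σ' := hσ'mem.1.1
  have hσ'0 : 0 ≤ σ' := le_trans ht0 hσ't0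
  have hσ'lt : σ' < τ := by
    rcases lt_or_eq_of_le hσ'τ with h | h
    · exact h
    · exfalso
      rw [h] at hσ'mem
      rcases hσ'mem.2 with h1 | h1 | h1
      · exact absurd h1 (ne_of_gt hτt0)
      · exact absurd h1 (ne_of_gt hΨpos)
      · exact hncap h1
  -- on (σ', τ] the good conditions hold
  have hmid : ∀ x, σ' < x → x ≤ τ → 0 < Psi G L κ (j+1) v x ∧
      (0 < Xi G L κ j v x ∨ fastCond G L κ v x) := by
    intro x hx1 hx2
    have hxIcc : x ∈ Set.Icc t0 τ := ⟨le_trans hσ't0 (le_of_lt hx1), hx2⟩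
    have hxnot : x ∉ Cs := fun hxC => absurd (le_csSup hCsbdd hxC) (not_le.mpr hx1)
    have hxdisj : ¬(x = t0 ∨ Psi G L κ (j+1) v x = 0 ∨
        (Xi G L κ j v x = 0 ∧ Psi G L κ (j+1) v x + κ ≤ PsiMax G L κ (j+1) x)) := by
      intro h
      exact hxnot ⟨hxIcc, h⟩
    push_neg at hxdisj
    obtain ⟨_, h2, h3⟩ := hxdisj
    have hΨx : 0 < Psi G L κ (j+1) v x :=
      lt_of_le_of_ne (Psi_nonneg G L κ (j+1) v x) (Ne.symm h2)
    refine ⟨hΨx, ?_⟩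
    rcases lt_or_eq_of_le (Xi_nonneg G L κ j v x) with h | h
    · exact Or.inl h
    · right
      have hx0 : 0 ≤ x := le_trans ht0 hxIcc.1
      rcases cap_dichotomy hconn hκ j v x h.symm hΨx with hfast | hcap
      · exact hfast
      · linarith [hcap, h3 h.symm]
  -- case analysis on the type of σ'
  rcases hσ'mem.2 with hA | hA | hA
  rotate_left
  · -- Ψ_v(σ') = 0 : K is non-increasing on [σ', τ]
    have hdec := decay_bound (f := K v) (g := fun _ => K v σ') (a := σ') (b := τ)
      (C := 0) le_rfl ((hKcont v).continuousOn)
      (by intro x y _ _ _; simp)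
      le_rfl
      ?_ τ hσ'τ le_rfl
    · have h1 : K v σ' = c * Xi G L κ j v σ' := by rw [hK]; simp only [hA]; ring
      have h2 : Xi G L κ j v σ' ≤ ψ' :=
        le_trans (Xi_le_PsiMax G L κ hκ j v σ') (hbound σ' hσ't0)
      have h3 : K v σ' ≤ c * ψ' := by
        rw [h1]; exact mul_le_mul_of_nonneg_left h2 (le_of_lt hc0)
      have := hΦc τ
      rw [hKv] at hdec
      linarith
    · intro x hx1 hx2 hgf r hr
      have hx1' : σ' < x := by
        rcases lt_or_eq_of_le hx1 with h | h
        · exact h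
        · exfalso; rw [← h] at hgf; exact lt_irrefl _ hgf
      obtain ⟨hΨx, hgood⟩ := hmid x hx1' (le_of_lt hx2)
      have hx0 : 0 ≤ x := le_trans hσ'0 hx1
      have hksl := K_slope hconn hκ hdiff hrate hfastI hslowI j (le_of_lt hc0) hc1 v hx0
        hΨx hgood (r := r) (by rw [hcμ] at *; linarith)
      exact hksl
  · -- cap at σ' : A decays on [σ', τ], with starting value ≤ Φ σ' + M - κ
    obtain ⟨hXi0, hcap⟩ := hA
    have hdec := decay_bound (f := fun t => Psi G L κ (j+1) v t + 1 * Xi G L κ j v t)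
      (g := fun t => (Psi G L κ (j+1) v σ' + 1 * Xi G L κ j v σ') - (μ - ρ) * (t - σ'))
      (a := σ') (b := τ) (C := μ - ρ) (by linarith)
      (((cont_Psi hdiff (j+1) v).add (continuous_const.mul (cont_Xi hdiff j v))).continuousOn)
      (by intro x y _ hxy _; nlinarith)
      (by simp)
      ?_ τ hσ'τ le_rfl
    · -- conclude
      have hAσ : Psi G L κ (j+1) v σ' + 1 * Xi G L κ j v σ' ≤ Φ σ' + M - κ := by
        have h1 : PsiMax G L κ (j+1) σ' ≤ Y σ' := hPsiMaxY σ'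
        have h2 : Y σ' ≤ Φ σ' + M := hYle σ' hσ't0 hσ'τ
        rw [hXi0]
        simp only [mul_zero, add_zero]
        linarith
      have hΦσ : Φ σ' ≤ Φ τ + (μ - ρ) * (τ - σ') := hΦd σ' τ hσ'τ
      have hKA : K v τ ≤ Psi G L κ (j+1) v τ + 1 * Xi G L κ j v τ := by
        show Psi G L κ (j+1) v τ + c * Xi G L κ j v τ ≤ _
        have := Xi_nonneg G L κ j v τ
        nlinarith
      rw [hKv] at hKA
      linarith
    · intro x hx1 hx2 hgf r hr
      have hx1' : σ' < x := by
        rcases lt_or_eq_of_le hx1 with h | h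
        · exact h
        · exfalso
          rw [← h] at hgf
          simp only [sub_self, mul_zero, sub_zero] at hgf
          exact lt_irrefl _ hgf
      obtain ⟨hΨx, hgood⟩ := hmid x hx1' (le_of_lt hx2)
      have hx0 : 0 ≤ x := le_trans hσ'0 hx1
      exact K_slope hconn hκ hdiff hrate hfastI hslowI j zero_le_one le_rfl v hx0
        hΨx hgood (r := r) (by rw [one_mul]; linarith)
  · -- σ' = t0 : A decays on [t0, τ] from ≤ ψ'
    have hdec := decay_bound (f := fun t => Psi G L κ (j+1) v t + 1 * Xi G L κ j v t)
      (g := fun t => ψ' - (μ - ρ) * (t - σ'))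
      (a := σ') (b := τ) (C := μ - ρ) (by linarith)
      (((cont_Psi hdiff (j+1) v).add (continuous_const.mul (cont_Xi hdiff j v))).continuousOn)
      (by intro x y _ hxy _; nlinarith)
      (by simpa using hAψ v σ' hσ't0)
      ?_ τ hσ'τ le_rfl
    · have hΦτ : ψ' - (μ - ρ) * (τ - σ') ≤ Φ τ := by
        rw [hA]
        exact le_max_right _ _
      have hKA : K v τ ≤ Psi G L κ (j+1) v τ + 1 * Xi G L κ j v τ := by
        show Psi G L κ (j+1) v τ + c * Xi G L κ j v τ ≤ _
        have := Xi_nonneg G L κ j v τ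
        nlinarith
      rw [hKv] at hKA
      linarith
    · intro x hx1 hx2 hgf r hr
      have hx1' : σ' < x := by
        rcases lt_or_eq_of_le hx1 with h | h
        · exact h
        · exfalso
          rw [← h] at hgf
          have h1 := hAψ v σ' hσ't0
          simp only [sub_self, mul_zero, sub_zero, one_mul] at hgf h1
          linarith
      obtain ⟨hΨx, hgood⟩ := hmid x hx1' (le_of_lt hx2)
      have hx0 : 0 ≤ x := le_trans hσ'0 hx1
      exact K_slope hconn hκ hdiff hrate hfastI hslowI j zero_le_one le_rfl v hx0
        hΨx hgood (r := r) (by rw [one_mul]; linarith)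

end step

end GCS15

/-- geometric decay of `Ψ^{s'}` for `s' ≥ s`, after time `ψ/(μ-ρ)`. -/
theorem stmt_15 [Fintype V] [Nonempty V] (G : SimpleGraph V) (hconn : G.Connected)
    (L : V → ℝ → ℝ) (κ ρ μ : ℝ) (hκ : 0 < κ) (hρ : 0 < ρ) (hρμ : ρ < μ)
    (hdiff : ∀ v, Differentiable ℝ (L v))
    (hrate : ∀ v u, 0 ≤ u → 1 ≤ deriv (L v) u ∧ deriv (L v) u ≤ (1 + μ) * (1 + ρ))
    (hfastI : ∀ v u, 0 ≤ u → fastCond G L κ v u → 1 + μ ≤ deriv (L v) u)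
    (hslowI : ∀ v u, 0 ≤ u → slowCond G L κ v u → deriv (L v) u ≤ 1 + ρ)
    (s : ℕ) (ψ : ℝ) (hψ : ∀ t, 0 ≤ t → PsiMax G L κ s t ≤ ψ) :
    ∀ s' : ℕ, s ≤ s' → ∀ t, ψ / (μ - ρ) ≤ t → PsiMax G L κ s' t ≤ (ρ / μ) ^ (s' - s) * ψ := by
  have hμ : 0 < μ := lt_trans hρ hρμ
  have hμρ : 0 < μ - ρ := by linarith
  have hψ0 : 0 ≤ ψ := le_trans (GCS15.PsiMax_nonneg G L κ s 0) (hψ 0 le_rfl)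
  have hc0 : (0:ℝ) < ρ/μ := div_pos hρ hμ
  have hc1 : ρ/μ ≤ 1 := by rw [div_le_one hμ]; linarith
  have key : ∀ k : ℕ, ∀ t, (ψ - (ρ/μ)^k * ψ) / (μ - ρ) ≤ t →
      PsiMax G L κ (s+k) t ≤ (ρ/μ)^k * ψ := by
    intro k
    induction k with
    | zero =>
      intro t ht
      have h0 : (ψ - (ρ/μ)^0 * ψ) / (μ - ρ) = 0 := by simp
      rw [h0] at ht
      simpa using hψ t ht
    | succ k ih =>
      intro t ht
      have hTk0 : 0 ≤ (ψ - (ρ/μ)^k * ψ) / (μ - ρ) := by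
        apply div_nonneg _ (le_of_lt hμρ)
        have hpk : (ρ/μ)^k ≤ 1 := pow_le_one₀ (le_of_lt hc0) hc1
        nlinarith
      have hstep := GCS15.step hconn hκ hρ hρμ hdiff hrate hfastI hslowI (s+k)
        ((ψ - (ρ/μ)^k * ψ) / (μ - ρ)) ((ρ/μ)^k * ψ) hTk0 (by positivity) ih
      have hmono : (ψ - (ρ/μ)^k * ψ) / (μ - ρ) ≤ (ψ - (ρ/μ)^(k+1) * ψ) / (μ - ρ) := by
        apply div_le_div_of_nonneg_right _ hμρ.le
        have : (ρ/μ)^(k+1) ≤ (ρ/μ)^k := by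
          rw [pow_succ]
          nlinarith [pow_nonneg (le_of_lt hc0) k]
        nlinarith
      have htTk : (ψ - (ρ/μ)^k * ψ) / (μ - ρ) ≤ t := le_trans hmono ht
      have hres := hstep t htTk
      have hgoal : max (ρ/μ * ((ρ/μ)^k * ψ))
          ((ρ/μ)^k * ψ - (μ - ρ) * (t - (ψ - (ρ/μ)^k * ψ) / (μ - ρ)))
          ≤ (ρ/μ)^(k+1) * ψ := by
        apply max_le
        · rw [pow_succ]; exact le_of_eq (by ring)
        · have h1 : (μ - ρ) * ((ψ - (ρ/μ)^k * ψ) / (μ - ρ)) = ψ - (ρ/μ)^k * ψ := by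
            field_simp
          have h2 : ψ - (ρ/μ)^(k+1) * ψ ≤ (μ - ρ) * t := by
            rw [div_le_iff₀ hμρ] at ht
            linarith
          linarith [h1, h2]
      rw [show s + (k+1) = (s+k) + 1 from rfl]
      exact le_trans hres hgoal
  intro s' hs' t ht
  obtain ⟨k, rfl⟩ : ∃ k, s' = s + k := ⟨s' - s, (Nat.add_sub_cancel' hs').symm⟩
  have hk : s + k - s = k := by omega
  rw [hk]
  apply key k t
  have h1 : ψ - (ρ/μ)^k * ψ ≤ ψ := by
    nlinarith [pow_nonneg (le_of_lt hc0) k, hψ0, pow_le_one₀ (n := k) (le_of_lt hc0) hc1]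
  calc (ψ - (ρ/μ)^k * ψ) / (μ - ρ) ≤ ψ / (μ - ρ) :=
        div_le_div_of_nonneg_right h1 hμρ.le
    _ ≤ t := ht
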